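/- Let τ(C) be the block-Toeplitz matrix of a monic m×m matrix polynomial C of degree d, and let V₀ be a matrix whose columns span the orthogonal complement of the row space of τ(C). Then τ(C)·V₀ = 0, and the coefficient matrix [C₀ C₁ … C_{d-1} I] of C lies in the left null space of the block-Hankel matrix K = [H(V_{md}), …, H(V₁)] formed by reshaping the columns Vᵢ of V₀ into block-Hankel matrices with m(d+1) block rows. -/

import Mathlib

open Matrix

/-- The block-Toeplitz matrix `τ(C)` of right multiplication by the monic
degree-`d` matrix polynomial `C` (descending coefficient order). -/
def Toep (m d ℓ : ℕ) (C : Fin (d + 1) → Matrix (Fin m) (Fin m) ℝ) :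
    Matrix (Fin (ℓ - d) × Fin m) (Fin ℓ × Fin m) ℝ :=
  fun p q =>
    if (p.1 : ℕ) ≤ (q.1 : ℕ) ∧ (q.1 : ℕ) - (p.1 : ℕ) ≤ d then
      C ⟨d - ((q.1 : ℕ) - (p.1 : ℕ)), Nat.lt_succ_of_le (Nat.sub_le _ _)⟩ p.2 q.2
    else 0

/-- The coefficient block row `[C₀ C₁ … C_{d-1} C_d]` of `C` (with `C_d = I`
for monic `C`). -/
def coeffRow (m d : ℕ) (C : Fin (d + 1) → Matrix (Fin m) (Fin m) ℝ) :
    Matrix (Fin m) (Fin (d + 1) × Fin m) ℝ :=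
  fun i p => C p.1 i p.2

/-- The block-Hankel matrix obtained by reshaping the columns `Vᵢ` of `V₀` into
block-Hankel form with `d + 1` block rows, stacked horizontally. -/
def hankelStack {ι : Type*} (m d ℓ : ℕ) (V0 : Matrix (Fin ℓ × Fin m) ι ℝ) :
    Matrix (Fin (d + 1) × Fin m) (ι × Fin (ℓ - d)) ℝ :=
  fun p q =>
    V0 (⟨(q.2 : ℕ) + (d - (p.1 : ℕ)), by
        have h1 := q.2.isLt
        have h2 : d - (p.1 : ℕ) ≤ d := Nat.sub_le _ _
        omega⟩, p.2) q.1

/-- If the columns of `V₀` span the orthogonal complement of the row space of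
`τ(C)`, then `τ(C)·V₀ = 0`, and the coefficient row `[C₀ … C_{d-1} I]` of the
monic common factor `C` lies in the left null space of the stacked block-Hankel
matrix `K` built from the columns of `V₀`. -/
theorem gcd_from_nullspace_hankel {ι : Type*} (m d ℓ : ℕ)
    (C : Fin (d + 1) → Matrix (Fin m) (Fin m) ℝ)
    (hC : C ⟨d, Nat.lt_succ_self d⟩ = 1)
    (V0 : Matrix (Fin ℓ × Fin m) ι ℝ)
    (hspan : Submodule.span ℝ
        (Set.range fun i : ι =>
          (show EuclideanSpace ℝ (Fin ℓ × Fin m) from WithLp.toLp 2 fun c => V0 c i)) =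
      (Submodule.span ℝ
        (Set.range fun r : Fin (ℓ - d) × Fin m =>
          (show EuclideanSpace ℝ (Fin ℓ × Fin m) from WithLp.toLp 2 fun c => Toep m d ℓ C r c)))ᗮ) :
    Toep m d ℓ C * V0 = 0 ∧
      coeffRow m d C * hankelStack m d ℓ V0 = 0 := by
  have hTV : Toep m d ℓ C * V0 = 0 := by
    ext r i
    have hcol : (show EuclideanSpace ℝ (Fin ℓ × Fin m) from WithLp.toLp 2 fun c => V0 c i) ∈
        (Submodule.span ℝ
          (Set.range fun r : Fin (ℓ - d) × Fin m =>
            (show EuclideanSpace ℝ (Fin ℓ × Fin m) from WithLp.toLp 2 fun c => Toep m d ℓ C r c)))ᗮ := by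
      rw [← hspan]
      exact Submodule.subset_span ⟨i, rfl⟩
    have hrow : (show EuclideanSpace ℝ (Fin ℓ × Fin m) from WithLp.toLp 2 fun c => Toep m d ℓ C r c) ∈
        Submodule.span ℝ
          (Set.range fun r : Fin (ℓ - d) × Fin m =>
            (show EuclideanSpace ℝ (Fin ℓ × Fin m) from WithLp.toLp 2 fun c => Toep m d ℓ C r c)) :=
      Submodule.subset_span ⟨r, rfl⟩
    have h0 := (Submodule.mem_orthogonal _ _).1 hcol _ hrow
    rw [PiLp.inner_apply] at h0
    simpa [Matrix.mul_apply, mul_comm] using h0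
  refine ⟨hTV, ?_⟩
  ext i q
  obtain ⟨q1, q2⟩ := q
  have hzero : (Toep m d ℓ C * V0) (q2, i) q1 = 0 := by rw [hTV]; rfl
  rw [Matrix.mul_apply] at hzero ⊢
  rw [Matrix.zero_apply, ← hzero]
  have hd : (q2 : ℕ) < ℓ - d := q2.isLt
  refine Finset.sum_of_injOn
    (fun p : Fin (d + 1) × Fin m =>
      ((⟨(q2 : ℕ) + (d - (p.1 : ℕ)), by have := Nat.sub_le d (p.1 : ℕ); omega⟩ : Fin ℓ), p.2))
    ?_ (by intro p _; simp) ?_ ?_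
  · intro a _ b _ hab
    simp only [Prod.mk.injEq, Fin.mk.injEq] at hab
    have ha := a.1.isLt
    have hb := b.1.isLt
    exact Prod.ext (Fin.ext (by omega)) hab.2
  · intro c _ hc
    obtain ⟨c1, c2⟩ := c
    by_cases h : (q2 : ℕ) ≤ (c1 : ℕ) ∧ (c1 : ℕ) - (q2 : ℕ) ≤ d
    · exfalso
      apply hc
      refine ⟨(⟨d - ((c1 : ℕ) - (q2 : ℕ)), Nat.lt_succ_of_le (Nat.sub_le _ _)⟩, c2),
        Finset.mem_coe.2 (Finset.mem_univ _), ?_⟩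
      have hc1 := c1.isLt
      exact Prod.ext (Fin.ext (by simp; omega)) rfl
    · simp only [Toep]
      rw [if_neg h, zero_mul]
  · intro p _
    obtain ⟨p1, p2⟩ := p
    have hp1 := p1.isLt
    have hcond : (q2 : ℕ) ≤ (q2 : ℕ) + (d - (p1 : ℕ)) ∧
        ((q2 : ℕ) + (d - (p1 : ℕ))) - (q2 : ℕ) ≤ d := by omega
    simp only [Toep, coeffRow, hankelStack, hcond, if_true]
    congr 2
    exact Fin.ext (by simp; omega)
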